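/- Let X be a nonempty finite type, T ≥ 1, r : X → ℝ, α > 0, and p^pre a positive pretrained policy sequence with soft value functions v_t and soft-optimal policy sequence p*. Fix an initial distribution μ on X and define, for any policy sequence q, J(q) := E_{P^q_μ}[r(x_0)] − α · Σ_{t=1}^{T} E_{P^q_μ}[KL(q_{t-1}(·|x_t) ‖ p^pre_{t-1}(·|x_t))]. Then for every policy sequence q, J(q) ≤ Σ_{x_T} μ(x_T) v_T(x_T), and the soft-optimal policy sequence attains this bound: J(p*) = Σ_{x_T} μ(x_T) v_T(x_T). In particular, p* maximizes the entropy-regularized objective J over all policy sequences. -/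

import Mathlib

open Real

/-- KL divergence between two mass functions on a finite type, with the
convention `0 * log 0 = 0` (automatic, since `0 * _ = 0` in `ℝ`). -/
noncomputable def KLd {Y : Type*} [Fintype Y] (p q : Y → ℝ) : ℝ :=
  ∑ y, p y * Real.log (p y / q y)

/-- Product of transition probabilities along a trajectory `(x_{t-1}, …, x_0)`
(encoded as `y : Fin t → X`, with `y i = x_i`) starting from `x_t = x`:
`∏_{s=t}^{1} p_{s-1}(x_{s-1} | x_s)`. -/
noncomputable def chainProd {X : Type*} (p : ℕ → X → X → ℝ) (t : ℕ) (x : X)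
    (y : Fin t → X) : ℝ :=
  ∏ s : Fin t, p s (if h : (s : ℕ) + 1 < t then y ⟨(s : ℕ) + 1, h⟩ else x) (y s)

/-- The soft value functions: `v_0 = r` and, for `t ≥ 1`,
`v_t(x) = α * log ∑_{x_{t-1},…,x_0} (∏_{s=t}^{1} p_{s-1}(x_{s-1}|x_s)) exp(r(x_0)/α)`. -/
noncomputable def softValue {X : Type*} [Fintype X] (p : ℕ → X → X → ℝ) (r : X → ℝ)
    (α : ℝ) : ℕ → X → ℝ
  | 0, x => r x
  | (t + 1), x =>
      α * Real.log (∑ y : Fin (t + 1) → X,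
        chainProd p (t + 1) x y * Real.exp (r (y 0) / α))

/-- The soft-optimal policy
`p*_{t-1}(y|x) = p^pre_{t-1}(y|x) * exp(v_{t-1}(y)/α) / exp(v_t(x)/α)`.
The index `t : ℕ` here stands for `t-1`, so it uses `v_t` and `v_{t+1}`. -/
noncomputable def softOpt {X : Type*} [Fintype X] (p : ℕ → X → X → ℝ) (r : X → ℝ)
    (α : ℝ) (t : ℕ) (x y : X) : ℝ :=
  p t x y * Real.exp (softValue p r α t y / α) / Real.exp (softValue p r α (t + 1) x / α)

/-- The joint trajectory distribution
`P^q_μ(x_T,…,x_0) = μ(x_T) * ∏_{t=T}^{1} q_{t-1}(x_{t-1}|x_t)`, a trajectory being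
encoded as `x : Fin (T+1) → X` with `x i = x_i` (so `x (Fin.last T) = x_T`). -/
noncomputable def trajProb {X : Type*} (μ : X → ℝ) (q : ℕ → X → X → ℝ) (T : ℕ)
    (x : Fin (T + 1) → X) : ℝ :=
  μ (x (Fin.last T)) * ∏ t : Fin T, q t (x t.succ) (x t.castSucc)

/-- Expectation of `f` under the joint trajectory distribution `P^q_μ`. -/
noncomputable def trajExp {X : Type*} [Fintype X] (μ : X → ℝ) (q : ℕ → X → X → ℝ)
    (T : ℕ) (f : (Fin (T + 1) → X) → ℝ) : ℝ :=
  ∑ x : Fin (T + 1) → X, trajProb μ q T x * f x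

/-- `q` is a policy sequence for horizon `T`: for each `t < T` (our index `t`
stands for `t-1` with `1 ≤ t ≤ T`), `q t x ·` is a probability mass function. -/
def IsPolicy {X : Type*} [Fintype X] (T : ℕ) (q : ℕ → X → X → ℝ) : Prop :=
  ∀ t < T, ∀ x : X, (∀ y : X, 0 ≤ q t x y) ∧ (∑ y, q t x y) = 1

/-- A policy sequence is positive if all its transition probabilities are positive. -/
def IsPositive {X : Type*} (T : ℕ) (q : ℕ → X → X → ℝ) : Prop :=
  ∀ t < T, ∀ x y : X, 0 < q t x y

/-- The entropy-regularized objective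
`J(q) = E_{P^q_μ}[r(x_0)] − α ∑_{t=1}^T E_{P^q_μ}[KL(q_{t-1}(·|x_t) ‖ p^pre_{t-1}(·|x_t))]`. -/
noncomputable def Jobj {X : Type*} [Fintype X] (T : ℕ) (μ : X → ℝ)
    (ppre : ℕ → X → X → ℝ) (r : X → ℝ) (α : ℝ) (q : ℕ → X → X → ℝ) : ℝ :=
  trajExp μ q T (fun x => r (x 0))
    - α * ∑ t : Fin T, trajExp μ q T (fun x =>
        KLd (fun y => q t (x t.succ) y) (fun y => ppre t (x t.succ) y))

section AuxLemmas

set_option maxHeartbeats 1000000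

lemma sum_pi_snoc {X : Type*} [Fintype X] {n : ℕ} (f : (Fin (n+1) → X) → ℝ) :
    ∑ x : Fin (n+1) → X, f x = ∑ z : X, ∑ y : Fin n → X, f (Fin.snoc y z) := by
  calc ∑ x : Fin (n+1) → X, f x
      = ∑ p : X × (Fin n → X), f (Fin.snocEquiv (fun _ => X) p) :=
        (Fintype.sum_equiv (Fin.snocEquiv (fun _ => X)) _ _ fun p => rfl).symm
    _ = ∑ z : X, ∑ y : Fin n → X, f (Fin.snocEquiv (fun _ => X) (z, y)) :=
        Fintype.sum_prod_type _
    _ = ∑ z : X, ∑ y : Fin n → X, f (Fin.snoc y z) := rfl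

lemma chainProd_snoc {X : Type*} (p : ℕ → X → X → ℝ) (t : ℕ) (x z : X) (y : Fin t → X) :
    chainProd p (t + 1) x (Fin.snoc y z) = p t x z * chainProd p t z y := by
  unfold chainProd
  rw [Fin.prod_univ_castSucc, mul_comm]
  congr 1
  · have h1 : ¬ ((Fin.last t : ℕ) + 1 < t + 1) := by simp
    rw [dif_neg h1, Fin.snoc_last]
    simp
  · refine Finset.prod_congr rfl fun s _ => ?_
    have hc : ((s.castSucc : Fin (t+1)) : ℕ) + 1 < t + 1 := by
      simpa using s.isLt
    rw [dif_pos hc]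
    by_cases h2 : (s : ℕ) + 1 < t
    · rw [dif_pos h2]
      have he : (⟨((s.castSucc : Fin (t+1)) : ℕ)+1, hc⟩ : Fin (t+1))
          = Fin.castSucc ⟨(s:ℕ)+1, h2⟩ := rfl
      rw [he, Fin.snoc_castSucc, Fin.snoc_castSucc]
      simp
    · rw [dif_neg h2]
      have ht : ((s.castSucc : Fin (t+1)) : ℕ) + 1 = t := by
        have := s.isLt; simp at *; omega
      have he : (⟨((s.castSucc : Fin (t+1)) : ℕ)+1, hc⟩ : Fin (t+1)) = Fin.last t :=
        Fin.ext (by simpa using ht)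
      rw [he, Fin.snoc_last, Fin.snoc_castSucc]
      simp

section SoftValue

variable {X : Type*} [Fintype X] [Nonempty X]

lemma exp_softValue (ppre : ℕ → X → X → ℝ) (r : X → ℝ) {α : ℝ} (hα : 0 < α) (t : ℕ)
    (hpos : ∀ s < t+1, ∀ x y, 0 < ppre s x y) (x : X) :
    Real.exp (softValue ppre r α (t+1) x / α)
      = ∑ y : Fin (t+1) → X, chainProd ppre (t+1) x y * Real.exp (r (y 0) / α) := by
  have hZ : 0 < ∑ y : Fin (t+1) → X, chainProd ppre (t+1) x y * Real.exp (r (y 0) / α) := by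
    apply Finset.sum_pos
    · intro y _
      refine mul_pos (Finset.prod_pos fun s _ => hpos s s.isLt _ _) (Real.exp_pos _)
    · exact Finset.univ_nonempty
  show Real.exp (α * Real.log _ / α) = _
  rw [mul_div_cancel_left₀ _ (ne_of_gt hα), Real.exp_log hZ]

lemma exp_softValue_succ (ppre : ℕ → X → X → ℝ) (r : X → ℝ) {α : ℝ} (hα : 0 < α) (t : ℕ)
    (hpos : ∀ s < t+1, ∀ x y, 0 < ppre s x y) (x : X) :
    Real.exp (softValue ppre r α (t+1) x / α)
      = ∑ w, ppre t x w * Real.exp (softValue ppre r α t w / α) := by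
  cases t with
  | zero =>
    rw [exp_softValue ppre r hα 0 hpos x,
        sum_pi_snoc (fun y => chainProd ppre 1 x y * Real.exp (r (y 0)/α))]
    refine Finset.sum_congr rfl fun z _ => ?_
    rw [Fintype.sum_unique, chainProd_snoc]
    have h0 : (Fin.snoc (default : Fin 0 → X) z : Fin 1 → X) 0 = z := by
      rw [show (0 : Fin 1) = Fin.last 0 from rfl, Fin.snoc_last]
    rw [h0]
    simp [chainProd, softValue]
  | succ s =>
    rw [exp_softValue ppre r hα (s+1) hpos x,
        sum_pi_snoc (fun y : Fin (s+1+1) → X =>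
          chainProd ppre (s+1+1) x y * Real.exp (r (y 0)/α))]
    refine Finset.sum_congr rfl fun z _ => ?_
    have hz : ∀ y : Fin (s+1) → X, (Fin.snoc y z : Fin (s+1+1) → X) 0 = y 0 := fun y => by
      rw [show (0 : Fin (s+1+1)) = Fin.castSucc 0 from rfl, Fin.snoc_castSucc]
    have step : ∀ y : Fin (s+1) → X,
        chainProd ppre (s+1+1) x (Fin.snoc y z)
            * Real.exp (r ((Fin.snoc y z : Fin (s+1+1) → X) 0)/α)
          = ppre (s+1) x z * (chainProd ppre (s+1) z y * Real.exp (r (y 0)/α)) := by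
      intro y
      rw [chainProd_snoc, hz y]; ring
    rw [Finset.sum_congr rfl (fun y _ => step y), ← Finset.mul_sum,
      ← exp_softValue ppre r hα s (fun u hu => hpos u (hu.trans (Nat.lt_succ_self _))) z]

lemma softOpt_pos (ppre : ℕ → X → X → ℝ) (r : X → ℝ) (α : ℝ) {t : ℕ} {x y : X}
    (h : 0 < ppre t x y) : 0 < softOpt ppre r α t x y :=
  div_pos (mul_pos h (Real.exp_pos _)) (Real.exp_pos _)

lemma softOpt_sum (ppre : ℕ → X → X → ℝ) (r : X → ℝ) {α : ℝ} (hα : 0 < α) (t : ℕ)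
    (hpos : ∀ s < t+1, ∀ x y, 0 < ppre s x y) (x : X) :
    ∑ w, softOpt ppre r α t x w = 1 := by
  unfold softOpt
  rw [← Finset.sum_div, ← exp_softValue_succ ppre r hα t hpos x,
    div_self (Real.exp_pos _).ne']

end SoftValue

section KL

lemma KLd_nonneg {Y : Type*} [Fintype Y] {p s : Y → ℝ} (hp0 : ∀ y, 0 ≤ p y)
    (hp1 : ∑ y, p y = 1) (hs : ∀ y, 0 < s y) (hs1 : ∑ y, s y ≤ 1) : 0 ≤ KLd p s := by
  have key : ∀ y ∈ Finset.univ, p y - s y ≤ p y * Real.log (p y / s y) := by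
    intro y _
    rcases eq_or_lt_of_le (hp0 y) with h | h
    · rw [← h]; simp; linarith [hs y]
    · have hq : 0 < s y / p y := div_pos (hs y) h
      have hl := Real.log_le_sub_one_of_pos hq
      have hneg : Real.log (p y / s y) = - Real.log (s y / p y) := by
        rw [← Real.log_inv]
        congr 1
        rw [inv_div]
      have hps : p y * (s y / p y) = s y := by field_simp
      have h2 : p y * Real.log (s y / p y) ≤ p y * (s y / p y - 1) :=
        mul_le_mul_of_nonneg_left hl h.le
      rw [hneg]
      nlinarith [h2, hps]
  have hsum := Finset.sum_le_sum key
  rw [Finset.sum_sub_distrib, hp1] at hsum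
  unfold KLd
  linarith

lemma KLd_self {Y : Type*} [Fintype Y] {p : Y → ℝ} (hp : ∀ y, 0 < p y) : KLd p p = 0 := by
  unfold KLd
  refine Finset.sum_eq_zero fun y _ => ?_
  rw [div_self (hp y).ne', Real.log_one, mul_zero]

lemma kl_step {X : Type*} [Fintype X] [Nonempty X] (ppre : ℕ → X → X → ℝ) (r : X → ℝ)
    {α : ℝ} (hα : 0 < α) (t : ℕ) (z : X) (hppre : ∀ w, 0 < ppre t z w)
    (qq : X → ℝ) (hq0 : ∀ w, 0 ≤ qq w) (hq1 : ∑ w, qq w = 1) :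
    (∑ w, qq w * softValue ppre r α t w) - α * KLd qq (fun w => ppre t z w)
      = softValue ppre r α (t+1) z
        - α * KLd qq (fun w => softOpt ppre r α t z w) := by
  have term : ∀ w, qq w * Real.log (qq w / softOpt ppre r α t z w)
      = qq w * Real.log (qq w / ppre t z w)
        - qq w * (softValue ppre r α t w / α)
        + qq w * (softValue ppre r α (t+1) z / α) := by
    intro w
    rcases eq_or_lt_of_le (hq0 w) with h | h
    · rw [← h]; ring
    · have hso : 0 < softOpt ppre r α t z w := softOpt_pos _ _ _ (hppre w)
      unfold softOpt at hso ⊢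
      rw [Real.log_div h.ne' hso.ne', Real.log_div h.ne' (hppre w).ne',
          Real.log_div (mul_pos (hppre w) (Real.exp_pos _)).ne' (Real.exp_pos _).ne',
          Real.log_mul (hppre w).ne' (Real.exp_pos _).ne', Real.log_exp, Real.log_exp]
      ring
  have hKL : KLd qq (fun w => softOpt ppre r α t z w)
      = KLd qq (fun w => ppre t z w)
        - (∑ w, qq w * softValue ppre r α t w) / α
        + softValue ppre r α (t+1) z / α := by
    unfold KLd
    rw [Finset.sum_congr rfl (fun w _ => term w), Finset.sum_add_distrib,
      Finset.sum_sub_distrib, ← Finset.sum_mul, hq1, one_mul, Finset.sum_div]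
    congr 2
    exact Finset.sum_congr rfl fun w _ => by ring
  rw [hKL]
  field_simp
  ring

end KL

end AuxLemmas

section Traj

set_option maxHeartbeats 1000000

variable {X : Type*} [Fintype X]

lemma trajProb_snoc (μ : X → ℝ) (q : ℕ → X → X → ℝ) (S : ℕ) (y : Fin (S+1) → X) (z : X) :
    trajProb μ q (S+1) (Fin.snoc y z) = μ z * trajProb (q S z) q S y := by
  unfold trajProb
  rw [Fin.prod_univ_castSucc]
  simp only [Fin.snoc_last, Fin.succ_last, Fin.succ_castSucc, Fin.snoc_castSucc,
    Fin.coe_castSucc, Fin.val_last]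
  ring

lemma trajExp_succ (μ : X → ℝ) (q : ℕ → X → X → ℝ) (S : ℕ) (f : (Fin (S+1+1) → X) → ℝ) :
    trajExp μ q (S+1) f
      = ∑ z, μ z * trajExp (q S z) q S (fun y => f (Fin.snoc y z)) := by
  unfold trajExp
  rw [sum_pi_snoc (fun x => trajProb μ q (S+1) x * f x)]
  refine Finset.sum_congr rfl fun z _ => ?_
  rw [Finset.mul_sum]
  refine Finset.sum_congr rfl fun y _ => ?_
  rw [trajProb_snoc]; ring

lemma trajExp_base (μ : X → ℝ) (q : ℕ → X → X → ℝ) (f : (Fin 1 → X) → ℝ) :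
    trajExp μ q 0 f = ∑ x, μ x * f (fun _ => x) := by
  unfold trajExp
  rw [sum_pi_snoc (fun x => trajProb μ q 0 x * f x)]
  refine Finset.sum_congr rfl fun z _ => ?_
  rw [Fintype.sum_unique]
  have h : (Fin.snoc (default : Fin 0 → X) z : Fin 1 → X) = fun _ => z :=
    funext fun i => by rw [show i = Fin.last 0 from Fin.ext (by omega), Fin.snoc_last]
  rw [h]
  simp [trajProb]

lemma trajExp_smul (c : X → ℝ) (ν : X → X → ℝ) (q : ℕ → X → X → ℝ) (T : ℕ)
    (g : (Fin (T+1) → X) → ℝ) :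
    trajExp (fun w => ∑ z, c z * ν z w) q T g = ∑ z, c z * trajExp (ν z) q T g := by
  unfold trajExp trajProb
  simp only [Finset.sum_mul]
  rw [Finset.sum_comm]
  refine Finset.sum_congr rfl fun z _ => ?_
  rw [Finset.mul_sum]
  refine Finset.sum_congr rfl fun x _ => by ring

lemma trajExp_congr {μ : X → ℝ} {q : ℕ → X → X → ℝ} {T : ℕ}
    {f g : (Fin (T+1) → X) → ℝ} (h : ∀ x, f x = g x) :
    trajExp μ q T f = trajExp μ q T g := by
  unfold trajExp
  exact Finset.sum_congr rfl fun x _ => by rw [h x]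

lemma trajExp_const {μ : X → ℝ} {q : ℕ → X → X → ℝ} {T : ℕ} (hq : IsPolicy T q) (c : ℝ) :
    trajExp μ q T (fun _ => c) = (∑ x, μ x) * c := by
  induction T generalizing μ with
  | zero => rw [trajExp_base, Finset.sum_mul]
  | succ S ih =>
    rw [trajExp_succ]
    have hq' : IsPolicy S q := fun t ht => hq t (ht.trans (Nat.lt_succ_self S))
    calc ∑ z, μ z * trajExp (q S z) q S (fun _ => c)
        = ∑ z, μ z * ((∑ w, q S z w) * c) :=
          Finset.sum_congr rfl fun z _ => by rw [ih hq']
      _ = ∑ z, μ z * c :=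
          Finset.sum_congr rfl fun z _ => by
            rw [(hq S (Nat.lt_succ_self S) z).2, one_mul]
      _ = (∑ x, μ x) * c := by rw [Finset.sum_mul]

end Traj

section Main

set_option maxHeartbeats 1000000

variable {X : Type*} [Fintype X] [Nonempty X]

lemma main_identity (r : X → ℝ) {α : ℝ} (hα : 0 < α) (ppre q : ℕ → X → X → ℝ)
    (T : ℕ) (hpre : ∀ t < T, ∀ x y, 0 < ppre t x y) (hq : IsPolicy T q)
    (μ : X → ℝ) (hμ1 : (∑ x, μ x) = 1) :
    Jobj T μ ppre r α q
      = (∑ x, μ x * softValue ppre r α T x)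
        - α * ∑ t : Fin T, trajExp μ q T (fun x =>
            KLd (fun y => q t (x t.succ) y)
              (fun y => softOpt ppre r α t (x t.succ) y)) := by
  induction T generalizing μ with
  | zero =>
    simp only [Jobj, Finset.univ_eq_empty, Finset.sum_empty, mul_zero, sub_zero]
    rw [trajExp_base]
    rfl
  | succ S ih =>
    have hq' : IsPolicy S q := fun t ht => hq t (ht.trans (Nat.lt_succ_self S))
    have hpre' : ∀ t < S, ∀ x y, 0 < ppre t x y :=
      fun t ht => hpre t (ht.trans (Nat.lt_succ_self S))
    set μ₁ : X → ℝ := fun w => ∑ z, μ z * q S z w with hμ₁def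
    have hμ₁ : ∑ w, μ₁ w = 1 := by
      rw [hμ₁def, Finset.sum_comm]
      calc ∑ z, ∑ w, μ z * q S z w
          = ∑ z, μ z * ∑ w, q S z w :=
            Finset.sum_congr rfl fun z _ => by rw [Finset.mul_sum]
        _ = ∑ z, μ z :=
            Finset.sum_congr rfl fun z _ => by
              rw [(hq S (Nat.lt_succ_self S) z).2, mul_one]
        _ = 1 := hμ1
    -- the reward term
    have hr : trajExp μ q (S+1) (fun x => r (x 0))
        = trajExp μ₁ q S (fun y => r (y 0)) := by
      rw [trajExp_succ μ q S (fun x => r (x 0)), hμ₁def, trajExp_smul]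
      refine Finset.sum_congr rfl fun z _ => ?_
      congr 1
    -- the KL sums
    have hKL : ∀ pp : ℕ → X → X → ℝ,
        (∑ t : Fin (S+1), trajExp μ q (S+1) (fun x =>
            KLd (fun y => q t (x t.succ) y) (fun y => pp t (x t.succ) y)))
        = (∑ t : Fin S, trajExp μ₁ q S (fun x =>
            KLd (fun y => q t (x t.succ) y) (fun y => pp t (x t.succ) y)))
          + ∑ z, μ z * KLd (fun y => q S z y) (fun y => pp S z y) := by
      intro pp
      rw [Fin.sum_univ_castSucc]
      congr 1
      · refine Finset.sum_congr rfl fun t _ => ?_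
        rw [trajExp_succ μ q S (fun x =>
            KLd (fun y => q t.castSucc (x t.castSucc.succ) y)
              (fun y => pp t.castSucc (x t.castSucc.succ) y)),
          hμ₁def, trajExp_smul]
        refine Finset.sum_congr rfl fun z _ => ?_
        congr 1
        refine trajExp_congr fun y => ?_
        have harg : (Fin.snoc y z : Fin (S+1+1) → X) t.castSucc.succ = y t.succ := by
          rw [Fin.succ_castSucc, Fin.snoc_castSucc]
        rw [harg]
        norm_num
      · rw [trajExp_succ μ q S (fun x =>
            KLd (fun y => q (Fin.last S) (x (Fin.last S).succ) y)
              (fun y => pp (Fin.last S) (x (Fin.last S).succ) y))]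
        refine Finset.sum_congr rfl fun z _ => ?_
        congr 1
        have harg : ∀ y : Fin (S+1) → X,
            (Fin.snoc y z : Fin (S+1+1) → X) (Fin.last S).succ = z := fun y => by
          rw [Fin.succ_last, Fin.snoc_last]
        calc trajExp (q S z) q S (fun y =>
              KLd (fun w => q (Fin.last S) ((Fin.snoc y z : Fin (S+1+1) → X) (Fin.last S).succ) w)
                (fun w => pp (Fin.last S) ((Fin.snoc y z : Fin (S+1+1) → X) (Fin.last S).succ) w))
            = trajExp (q S z) q S (fun _ =>
                KLd (fun w => q S z w) (fun w => pp S z w)) := by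
              refine trajExp_congr fun y => ?_
              rw [harg y]
              norm_num
          _ = (∑ w, q S z w) * KLd (fun w => q S z w) (fun w => pp S z w) :=
              trajExp_const hq' _
          _ = KLd (fun w => q S z w) (fun w => pp S z w) := by
              rw [(hq S (Nat.lt_succ_self S) z).2, one_mul]
    -- one-step optimality
    have key : (∑ w, μ₁ w * softValue ppre r α S w)
        - α * ∑ z, μ z * KLd (fun y => q S z y) (fun y => ppre S z y)
      = (∑ z, μ z * softValue ppre r α (S+1) z)
        - α * ∑ z, μ z * KLd (fun y => q S z y) (fun y => softOpt ppre r α S z y) := by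
      have h1 : ∑ w, μ₁ w * softValue ppre r α S w
          = ∑ z, μ z * ∑ w, q S z w * softValue ppre r α S w := by
        rw [hμ₁def]
        simp only [Finset.sum_mul]
        rw [Finset.sum_comm]
        refine Finset.sum_congr rfl fun z _ => ?_
        rw [Finset.mul_sum]
        exact Finset.sum_congr rfl fun w _ => by ring
      rw [h1]
      calc (∑ z, μ z * ∑ w, q S z w * softValue ppre r α S w)
            - α * ∑ z, μ z * KLd (fun y => q S z y) (fun y => ppre S z y)
          = ∑ z, μ z * ((∑ w, q S z w * softValue ppre r α S w)
              - α * KLd (fun y => q S z y) (fun y => ppre S z y)) := by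
            rw [Finset.mul_sum, ← Finset.sum_sub_distrib]
            exact Finset.sum_congr rfl fun z _ => by ring
        _ = ∑ z, μ z * (softValue ppre r α (S+1) z
              - α * KLd (fun y => q S z y) (fun y => softOpt ppre r α S z y)) := by
            refine Finset.sum_congr rfl fun z _ => ?_
            rw [kl_step ppre r hα S z (hpre S (Nat.lt_succ_self S) z) (fun y => q S z y)
              (hq S (Nat.lt_succ_self S) z).1 (hq S (Nat.lt_succ_self S) z).2]
        _ = (∑ z, μ z * softValue ppre r α (S+1) z)
            - α * ∑ z, μ z * KLd (fun y => q S z y) (fun y => softOpt ppre r α S z y) := by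
            rw [Finset.mul_sum, ← Finset.sum_sub_distrib]
            exact Finset.sum_congr rfl fun z _ => by ring
    have goalL : Jobj (S+1) μ ppre r α q
        = Jobj S μ₁ ppre r α q
          - α * ∑ z, μ z * KLd (fun y => q S z y) (fun y => ppre S z y) := by
      unfold Jobj
      rw [hr, hKL ppre]
      ring
    rw [goalL, ih hpre' hq' μ₁ hμ₁, hKL (softOpt ppre r α), mul_add]
    linarith [key]

end Main

set_option maxHeartbeats 1000000 in
/-- `J(q) ≤ ∑_{x_T} μ(x_T) v_T(x_T)` for every policy sequence `q`,
and the soft-optimal policy sequence attains this bound, so `p*` maximizes the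
entropy-regularized objective `J` over all policy sequences. -/
theorem statement10 {X : Type*} [Fintype X] [Nonempty X]
    (T : ℕ) (hT : 1 ≤ T) (r : X → ℝ) (α : ℝ) (hα : 0 < α)
    (ppre : ℕ → X → X → ℝ) (hpre : IsPolicy T ppre) (hprePos : IsPositive T ppre)
    (μ : X → ℝ) (hμ0 : ∀ x, 0 ≤ μ x) (hμ1 : (∑ x, μ x) = 1) :
    (∀ q : ℕ → X → X → ℝ, IsPolicy T q →
        Jobj T μ ppre r α q ≤ ∑ x, μ x * softValue ppre r α T x)
    ∧ Jobj T μ ppre r α (fun t x y => softOpt ppre r α t x y)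
        = ∑ x, μ x * softValue ppre r α T x := by
  constructor
  · intro q hq
    rw [main_identity r hα ppre q T hprePos hq μ hμ1]
    have hRem0 : 0 ≤ ∑ t : Fin T, trajExp μ q T (fun x =>
        KLd (fun y => q t (x t.succ) y)
          (fun y => softOpt ppre r α t (x t.succ) y)) := by
      refine Finset.sum_nonneg fun t _ => ?_
      unfold trajExp trajProb
      refine Finset.sum_nonneg fun x _ => ?_
      refine mul_nonneg ?_ ?_
      · exact mul_nonneg (hμ0 _) (Finset.prod_nonneg fun s _ => (hq s s.isLt _).1 _)
      · refine KLd_nonneg (hq t t.isLt _).1 (hq t t.isLt _).2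
          (fun w => softOpt_pos _ _ _ (hprePos t t.isLt _ w)) ?_
        exact le_of_eq (softOpt_sum ppre r hα t
          (fun s hs => hprePos s (by have := t.isLt; omega)) _)
    linarith [mul_nonneg hα.le hRem0]
  · have hstar : IsPolicy T (fun t x y => softOpt ppre r α t x y) := by
      intro t ht x
      refine ⟨fun y => (softOpt_pos ppre r α (hprePos t ht x y)).le, ?_⟩
      exact softOpt_sum ppre r hα t (fun s hs => hprePos s (by omega)) x
    rw [main_identity r hα ppre _ T hprePos hstar μ hμ1]
    have hz : (∑ t : Fin T, trajExp μ (fun t x y => softOpt ppre r α t x y) T (fun x =>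
        KLd (fun y => softOpt ppre r α (t : ℕ) (x t.succ) y)
          (fun y => softOpt ppre r α (t : ℕ) (x t.succ) y))) = 0 := by
      refine Finset.sum_eq_zero fun t _ => ?_
      rw [trajExp_congr (g := fun _ => (0:ℝ))
          (fun x => KLd_self (fun w => softOpt_pos ppre r α (hprePos t t.isLt _ w))),
        trajExp_const hstar, mul_zero]
    rw [hz, mul_zero, sub_zero]
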